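/- Let H be an irredundant cover of a finite non-cyclic group G whose size equals the number of maximal cyclic subgroups of G. Then each member of H contains exactly one maximal cyclic subgroup of G. -/

import Mathlib

def IsCover {G : Type*} [Group G] (S : Set (Subgroup G)) : Prop :=
  (∀ H ∈ S, H ≠ (⊤ : Subgroup G)) ∧ ∀ g : G, ∃ H ∈ S, g ∈ H

def IsIrredundantCover {G : Type*} [Group G] (S : Set (Subgroup G)) : Prop :=
  IsCover S ∧ ∀ T : Set (Subgroup G), T ⊂ S → ¬ IsCover T

def IsMaxCyclic {G : Type*} [Group G] (C : Subgroup G) : Prop :=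
  IsCyclic C ∧ ∀ D : Subgroup G, IsCyclic D → C ≤ D → C = D

def OnlyOneSizedCovers (G : Type*) [Group G] : Prop :=
  ∀ S T : Set (Subgroup G), IsIrredundantCover S → IsIrredundantCover T →
    S.ncard = T.ncard

lemma exists_maxCyclic_ge {G : Type*} [Group G] [Finite G] (x : G) :
    ∃ C : Subgroup G, IsMaxCyclic C ∧ x ∈ C := by
  have hfin : ({D : Subgroup G | IsCyclic D ∧ x ∈ D}).Finite := Set.toFinite _
  have hcyc : IsCyclic (Subgroup.zpowers x) :=
    ⟨⟨x, Subgroup.mem_zpowers x⟩, fun a => by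
      obtain ⟨n, hn⟩ := a.2
      exact ⟨n, Subtype.ext (by simpa using hn)⟩⟩
  have hne : ({D : Subgroup G | IsCyclic D ∧ x ∈ D}).Nonempty :=
    ⟨Subgroup.zpowers x, ⟨hcyc, Subgroup.mem_zpowers x⟩⟩
  obtain ⟨C, hC, hmax⟩ := hfin.exists_maximalFor id _ hne
  exact ⟨C, ⟨hC.1, fun D hD hle => le_antisymm hle (hmax ⟨hD, hle hC.2⟩ hle)⟩, hC.2⟩

lemma cyclic_le_cover {G : Type*} [Group G] (S : Set (Subgroup G)) (hS : IsCover S)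
    (C : Subgroup G) (hC : IsCyclic C) : ∃ H ∈ S, C ≤ H := by
  obtain ⟨g, hg⟩ := hC.exists_generator
  obtain ⟨H, hH, hgH⟩ := hS.2 (g : G)
  refine ⟨H, hH, fun y hy => ?_⟩
  obtain ⟨n, hn⟩ := hg ⟨y, hy⟩
  have : (g : G) ^ n = y := by
    have := congrArg Subtype.val hn
    simpa using this
  exact this ▸ H.zpow_mem hgH n

theorem stmt2 (G : Type*) [Group G] [Finite G] (hG : ¬ IsCyclic G)
    (S : Set (Subgroup G)) (hS : IsIrredundantCover S)
    (hcard : S.ncard = {C : Subgroup G | IsMaxCyclic C}.ncard) :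
    ∀ H ∈ S, ∃! C : Subgroup G, IsMaxCyclic C ∧ C ≤ H := by
  classical
  -- private elements
  have hpriv : ∀ H ∈ S, ∃ x : G, x ∈ H ∧ ∀ K ∈ S, x ∈ K → K = H := by
    intro H hH
    have hss : S \ {H} ⊂ S := by
      constructor
      · exact Set.diff_subset
      · intro hsub
        exact (hsub hH).2 rfl
    have hnc := hS.2 _ hss
    rw [IsCover, not_and_or] at hnc
    rcases hnc with h1 | h2
    · exact absurd (fun K hK => hS.1.1 K hK.1) h1
    · push_neg at h2
      obtain ⟨x, hx⟩ := h2
      obtain ⟨H', hH', hxH'⟩ := hS.1.2 x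
      have hkey : ∀ K ∈ S, x ∈ K → K = H := by
        intro K hK hxK
        by_contra hne
        exact hx K ⟨hK, hne⟩ hxK
      exact ⟨x, (hkey H' hH' hxH') ▸ hxH', hkey⟩
  choose! x hxmem hxpriv using hpriv
  choose! f hfmax hfmem using fun H (hH : H ∈ S) => exists_maxCyclic_ge (G := G) (x H)
  -- f H ≤ H
  have hfle : ∀ H ∈ S, f H ≤ H := by
    intro H hH
    obtain ⟨H', hH', hle⟩ := cyclic_le_cover S hS.1 (f H) (hfmax H hH).1
    exact (hxpriv H hH H' hH' (hle (hfmem H hH))) ▸ hle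
  -- injectivity of f on S
  have hinj : Set.InjOn f S := by
    intro H hH H' hH' heq
    have : x H' ∈ f H := heq ▸ hfmem H' hH'
    exact hxpriv H' hH' H hH (hfle H hH this)
  -- image is all maximal cyclics
  have himg : f '' S = {C : Subgroup G | IsMaxCyclic C} := by
    refine Set.eq_of_subset_of_ncard_le ?_ ?_ (Set.toFinite _)
    · rintro _ ⟨H, hH, rfl⟩; exact hfmax H hH
    · rw [Set.ncard_image_of_injOn hinj, hcard]
  intro H hH
  refine ⟨f H, ⟨hfmax H hH, hfle H hH⟩, ?_⟩
  rintro D ⟨hDmax, hDle⟩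
  have : D ∈ f '' S := himg ▸ hDmax
  obtain ⟨H', hH', rfl⟩ := this
  have : x H' ∈ H := hDle (hfmem H' hH')
  rw [hxpriv H' hH' H hH this]
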